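/- Let ρ = |0⟩⟨0|_A ⊗ (1/2^b) I_B be a state on a+b qubits, where register A has a qubits and B has b qubits. For any unitary U on all n = a+b qubits and any partition of the n qubits into registers C (with c qubits) and D (with d qubits), the (0,0) diagonal entry of the reduced state tr_C(U ρ U†) is at most 2^c / 2^b = 2^{a-d}. -/

import Mathlib

open Matrix BigOperators Kronecker
open scoped Classical ComplexOrder

noncomputable section

def ptraceFst {C D : Type*} [Fintype C] (σ : Matrix (C × D) (C × D) ℂ) :
    Matrix D D ℂ := Matrix.of fun y y' => ∑ j : C, σ (j, y) (j, y')

def ptraceSnd {C D : Type*} [Fintype D] (σ : Matrix (C × D) (C × D) ℂ) :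
    Matrix C C ℂ := Matrix.of fun x x' => ∑ j : D, σ (x, j) (x', j)

/-- The square root of a positive semidefinite matrix, as `Matrix.PosSemidef.sqrt` was defined
in Mathlib (December 2024). -/
def posSemidefSqrt {n : Type*} [Fintype n] [DecidableEq n] {A : Matrix n n ℂ}
    (hA : A.PosSemidef) : Matrix n n ℂ :=
  (hA.1.eigenvectorUnitary : Matrix n n ℂ) *
    diagonal (fun i => ((Real.sqrt (hA.1.eigenvalues i) : ℝ) : ℂ)) *
    (star hA.1.eigenvectorUnitary : Matrix n n ℂ)

def traceNorm {n : Type*} [Fintype n] [DecidableEq n] (M : Matrix n n ℂ) : ℝ :=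
  (posSemidefSqrt (Matrix.posSemidef_conjTranspose_mul_self M)).trace.re

def traceDist {n : Type*} [Fintype n] [DecidableEq n] (σ σ' : Matrix n n ℂ) : ℝ :=
  traceNorm (σ - σ') / 2

def IsDensity {n : Type*} [Fintype n] (M : Matrix n n ℂ) : Prop :=
  M.PosSemidef ∧ M.trace = 1

def IsPure {n : Type*} [Fintype n] (σ : Matrix n n ℂ) : Prop :=
  ∃ ψ : n → ℂ, (∑ i, Complex.normSq (ψ i)) = 1 ∧ σ = Matrix.vecMulVec ψ (star ψ)

def inputState (a b : ℕ) :
    Matrix (Fin (2^a) × Fin (2^b)) (Fin (2^a) × Fin (2^b)) ℂ :=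
  (Matrix.single 0 0 1) ⊗ₖ (((2:ℂ)^b)⁻¹ • (1 : Matrix (Fin (2^b)) (Fin (2^b)) ℂ))

def measSub {C D : Type*} [Fintype C] [Fintype D] (σ : Matrix (C × D) (C × D) ℂ) (j : C) :
    Matrix D D ℂ := Matrix.of fun y y' => σ (j, y) (j, y')

def measProb {C D : Type*} [Fintype C] [Fintype D] (σ : Matrix (C × D) (C × D) ℂ) (j : C) : ℝ :=
  ((measSub σ j).trace).re

def gibbs {n : Type*} [Fintype n] [DecidableEq n] (β : ℝ) {H : Matrix n n ℂ}
    (hH : H.IsHermitian) : Matrix n n ℂ :=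
  ((hH.cfc (fun x => Real.exp (-β * x))).trace)⁻¹ • hH.cfc (fun x => Real.exp (-β * x))

def vNEntropy {n : Type*} [Fintype n] [DecidableEq n] (M : Matrix n n ℂ) : ℝ :=
  if h : M.IsHermitian then -∑ i, (h.eigenvalues i) * Real.logb 2 (h.eigenvalues i) else 0

def iterState (n : ℕ) (U : ℕ → Matrix (Fin 2 × Fin (2^n)) (Fin 2 × Fin (2^n)) ℂ) :
    ℕ → Matrix (Fin (2^n)) (Fin (2^n)) ℂ
  | 0 => ((2:ℂ)^n)⁻¹ • 1
  | k+1 => ptraceFst (U k * ((Matrix.single 0 0 1) ⊗ₖ iterState n U k) * (U k)ᴴ)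

lemma diag_re_nonneg {n : Type*} [Fintype n] [DecidableEq n] {N : Matrix n n ℂ}
    (h : N.PosSemidef) (i : n) : 0 ≤ (N i i).re := by
  have := h.re_dotProduct_nonneg (Pi.single i 1)
  simpa [dotProduct, mulVec, Pi.single_apply, Finset.sum_ite_eq] using this

lemma compl_psd (a b : ℕ) :
    (((2:ℂ)^b)⁻¹ • 1 - inputState a b).PosSemidef := by
  have : ((2:ℂ)^b)⁻¹ • 1 - inputState a b =
      Matrix.diagonal (fun p : Fin (2^a) × Fin (2^b) =>
        if p.1 = 0 then 0 else ((2:ℂ)^b)⁻¹) := by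
    ext ⟨x, y⟩ ⟨x', y'⟩
    by_cases hx : x = x' <;> by_cases hy : y = y' <;>
      simp [inputState, Matrix.diagonal, Matrix.one_apply, kroneckerMap_apply,
        Matrix.single, hx, hy, Prod.ext_iff] <;> aesop
  rw [this]
  refine Matrix.posSemidef_diagonal_iff.mpr fun i => ?_
  by_cases h : i.1 = 0 <;> simp [h]

theorem stmt1 (a b c d : ℕ) (hn : a + b = c + d)
    (e : (Fin (2^a) × Fin (2^b)) ≃ (Fin (2^c) × Fin (2^d)))
    (U : Matrix (Fin (2^c) × Fin (2^d)) (Fin (2^c) × Fin (2^d)) ℂ)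
    (hU : U ∈ Matrix.unitaryGroup (Fin (2^c) × Fin (2^d)) ℂ) :
    ((ptraceFst (U * (Matrix.reindex e e (inputState a b)) * Uᴴ)) 0 0).re
      ≤ (2:ℝ)^c / 2^b := by
  set ρ' := Matrix.reindex e e (inputState a b) with hρ'
  have h1 : ((2:ℂ)^b)⁻¹ • (1 : Matrix (Fin (2^c) × Fin (2^d)) (Fin (2^c) × Fin (2^d)) ℂ) - ρ'
      = Matrix.reindex e e (((2:ℂ)^b)⁻¹ • 1 - inputState a b) := by
    ext i j
    simp [hρ', Matrix.reindex_apply, Matrix.submatrix_apply, Matrix.one_apply,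
      e.symm.injective.eq_iff]
  have hpsd' : (((2:ℂ)^b)⁻¹ • (1 : Matrix (Fin (2^c) × Fin (2^d)) (Fin (2^c) × Fin (2^d)) ℂ)
      - ρ').PosSemidef := by
    rw [h1, Matrix.reindex_apply]
    exact (compl_psd a b).submatrix _
  have hUU : U * Uᴴ = 1 := by
    have := (Matrix.mem_unitaryGroup_iff.mp hU)
    simpa [Matrix.star_eq_conjTranspose] using this
  have hN : (((2:ℂ)^b)⁻¹ • (1 : Matrix (Fin (2^c) × Fin (2^d)) (Fin (2^c) × Fin (2^d)) ℂ)
      - U * ρ' * Uᴴ).PosSemidef := by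
    have h2 := hpsd'.mul_mul_conjTranspose_same U
    have h3 : U * (((2:ℂ)^b)⁻¹ • 1 - ρ') * Uᴴ
        = ((2:ℂ)^b)⁻¹ • (1 : Matrix (Fin (2^c) × Fin (2^d)) (Fin (2^c) × Fin (2^d)) ℂ)
          - U * ρ' * Uᴴ := by
      rw [Matrix.mul_sub, Matrix.sub_mul, Matrix.mul_smul, Matrix.smul_mul, mul_one, hUU]
    rwa [h3] at h2
  have key : ∀ j : Fin (2^c), ((U * ρ' * Uᴴ) (j, 0) (j, 0)).re ≤ ((2:ℝ)^b)⁻¹ := by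
    intro j
    have h := diag_re_nonneg hN (j, 0)
    have hre : ((((2:ℂ)^b)⁻¹ • (1 : Matrix (Fin (2^c) × Fin (2^d)) (Fin (2^c) × Fin (2^d)) ℂ)
        - U * ρ' * Uᴴ) (j,0) (j,0)).re
        = ((2:ℝ)^b)⁻¹ - ((U * ρ' * Uᴴ) (j, 0) (j, 0)).re := by
      simp only [Matrix.sub_apply, Matrix.smul_apply, Matrix.one_apply_eq, smul_eq_mul,
        mul_one, Complex.sub_re]
      congr 1
      rw [show ((2:ℂ)^b)⁻¹ = ((((2:ℝ)^b)⁻¹ : ℝ) : ℂ) by push_cast; ring, Complex.ofReal_re]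
    rw [hre] at h
    linarith
  have hsum : ((ptraceFst (U * ρ' * Uᴴ)) 0 0).re
      = ∑ j : Fin (2^c), ((U * ρ' * Uᴴ) (j, 0) (j, 0)).re := by
    simp [ptraceFst, Complex.re_sum]
  rw [hsum]
  calc ∑ j : Fin (2^c), ((U * ρ' * Uᴴ) (j, 0) (j, 0)).re
      ≤ ∑ _j : Fin (2^c), ((2:ℝ)^b)⁻¹ := Finset.sum_le_sum fun j _ => key j
    _ = (2:ℝ)^c / 2^b := by
        simp [Finset.sum_const, div_eq_mul_inv]


end
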